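/- Let z ∈ ℝ be irrational, let h ∈ GL₂(ℚ), and let t ∈ ℝ with t ∉ {0, 1, −1}. Set g = h · diag(t, t⁻¹) · h⁻¹, a real 2×2 matrix (h being viewed as a real matrix via the inclusion ℚ ⊂ ℝ). Then g does not fix the projective point [z : 1]: there is no c ∈ ℝ with g·(z,1)ᵀ = c·(z,1)ᵀ. -/
import Mathlib


open Matrix

/-- A `GL₂(ℚ)`-conjugate of the diagonal matrix `diag(t, t⁻¹)`, with `t ∉ {0, 1, -1}`,
does not fix an irrational point `[z : 1]` of the projective line. -/
theorem no_rational_split_torus_fixes_irrational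
    (z : ℝ) (hz : Irrational z)
    (h : GL (Fin 2) ℚ) (t : ℝ) (ht0 : t ≠ 0) (ht1 : t ≠ 1) (htm1 : t ≠ -1) :
    ¬ ∃ c : ℝ,
      (((h : Matrix (Fin 2) (Fin 2) ℚ).map ((↑) : ℚ → ℝ) *
        Matrix.diagonal ![t, t⁻¹] *
        ((↑(h⁻¹) : Matrix (Fin 2) (Fin 2) ℚ).map ((↑) : ℚ → ℝ))).mulVec ![z, 1])
        = c • ![z, 1] := by
  rintro ⟨c, hc⟩
  set M : Matrix (Fin 2) (Fin 2) ℚ := ↑(h⁻¹) with hMdef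
  set H : Matrix (Fin 2) (Fin 2) ℚ := ↑h with hHdef
  have hMH : M * H = 1 := h.inv_mul
  -- map to ℝ
  have hMHR : M.map ((↑) : ℚ → ℝ) * H.map ((↑) : ℚ → ℝ) = 1 := by
    rw [show ((↑) : ℚ → ℝ) = ⇑(Rat.castHom ℝ) from rfl, ← Matrix.map_mul, hMH]
    simp
  set MR := M.map ((↑) : ℚ → ℝ) with hMR
  set HR := H.map ((↑) : ℚ → ℝ) with hHR
  set w : Fin 2 → ℝ := MR.mulVec ![z, 1] with hw
  have key : (Matrix.diagonal ![t, t⁻¹]).mulVec w = c • w := by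
    have hk := congrArg MR.mulVec hc
    rw [Matrix.mulVec_smul, Matrix.mulVec_mulVec, ← Matrix.mul_assoc, ← Matrix.mul_assoc,
      hMHR, Matrix.one_mul] at hk
    rw [hw, Matrix.mulVec_mulVec]
    exact hk
  have hw0 : w 0 = (M 0 0 : ℝ) * z + (M 0 1 : ℝ) := by
    simp [hw, hMR, Matrix.mulVec, dotProduct, Fin.sum_univ_two]
  have hw1 : w 1 = (M 1 0 : ℝ) * z + (M 1 1 : ℝ) := by
    simp [hw, hMR, Matrix.mulVec, dotProduct, Fin.sum_univ_two]
  have hdet : M.det ≠ 0 := by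
    have : IsUnit M.det := by
      exact Matrix.isUnit_det_of_left_inverse (B := H) h.mul_inv
    exact this.ne_zero
  have hdet2 : M 0 0 * M 1 1 - M 0 1 * M 1 0 ≠ 0 := by
    rwa [Matrix.det_fin_two] at hdet
  -- a component `M i 0 * z + M i 1` can vanish only if both entries vanish
  have hcomp : ∀ a b : ℚ, (a : ℝ) * z + (b : ℝ) = 0 → a = 0 ∧ b = 0 := by
    intro a b hab
    by_cases ha : a = 0
    · refine ⟨ha, ?_⟩
      rw [ha] at hab
      exact_mod_cast by simpa using hab
    · exfalso
      apply hz
      refine ⟨-b / a, ?_⟩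
      push_cast
      field_simp
      have : (a : ℝ) ≠ 0 := by exact_mod_cast ha
      linarith [hab]
  have hwz0 : w 0 ≠ 0 := by
    intro h0
    rw [hw0] at h0
    obtain ⟨ha, hb⟩ := hcomp _ _ h0
    apply hdet2
    rw [ha, hb]; ring
  have hwz1 : w 1 ≠ 0 := by
    intro h0
    rw [hw1] at h0
    obtain ⟨ha, hb⟩ := hcomp _ _ h0
    apply hdet2
    rw [ha, hb]; ring
  have k0 := congrFun key 0
  have k1 := congrFun key 1
  simp [Matrix.mulVec_diagonal] at k0 k1
  have hct : c = t := (k0.resolve_right hwz0).symm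
  have hct' : c = t⁻¹ := (k1.resolve_right hwz1).symm
  have he : t = t⁻¹ := hct.symm.trans hct'
  have : t * t = 1 := by
    nth_rewrite 2 [he]
    exact mul_inv_cancel₀ ht0
  have : (t - 1) * (t + 1) = 0 := by ring_nf; linarith [this]
  rcases mul_eq_zero.mp this with h1 | h1
  · exact ht1 (by linarith)
  · exact htm1 (by linarith)
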